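/- In the 3-strand braid monoid B3+ presented by generators a, b and the single relation aba = bab, the set S = {1, a, b, ab, ba, aba} is closed under right-lcm and right-complement: for any two elements x, y of S admitting a common right-multiple, their right-lcm x ∨ y and the complement x \ (x ∨ y) (the element z with x z = x ∨ y) both lie in S. -/

import Mathlib

/-- `h` is a right-lcm of `f` and `g`. -/
def IsRightLcm {M : Type*} [Monoid M] (f g h : M) : Prop :=
  (∃ z, f * z = h) ∧ (∃ z, g * z = h) ∧
    ∀ k, (∃ z, f * z = k) → (∃ z, g * z = k) → ∃ z, h * z = k

/-- The braid relation `aba = bab` on the free monoid on two generators. -/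
def braidRel : FreeMonoid (Fin 2) → FreeMonoid (Fin 2) → Prop := fun u v =>
  u = FreeMonoid.of 0 * FreeMonoid.of 1 * FreeMonoid.of 0 ∧
  v = FreeMonoid.of 1 * FreeMonoid.of 0 * FreeMonoid.of 1

/-- The 3-strand braid monoid `B3⁺ = ⟨a, b | aba = bab⟩`. -/
abbrev BraidMonoid3 := (conGen braidRel).Quotient

namespace Braid3Aux

abbrev W := FreeMonoid (Fin 2)

/-- One elementary braid rewrite anywhere in a word. -/
inductive Step : List (Fin 2) → List (Fin 2) → Prop
  | fwd (p q : List (Fin 2)) : Step (p ++ [0, 1, 0] ++ q) (p ++ [1, 0, 1] ++ q)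
  | bwd (p q : List (Fin 2)) : Step (p ++ [1, 0, 1] ++ q) (p ++ [0, 1, 0] ++ q)

theorem Step.symm' {u v : List (Fin 2)} (h : Step u v) : Step v u := by
  cases h with
  | fwd p q => exact Step.bwd p q
  | bwd p q => exact Step.fwd p q

theorem Step.app_left {u v : List (Fin 2)} (t : List (Fin 2)) (h : Step u v) :
    Step (t ++ u) (t ++ v) := by
  cases h with
  | fwd p q => simpa [List.append_assoc] using Step.fwd (t ++ p) q
  | bwd p q => simpa [List.append_assoc] using Step.bwd (t ++ p) q

theorem Step.app_right {u v : List (Fin 2)} (t : List (Fin 2)) (h : Step u v) :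
    Step (u ++ t) (v ++ t) := by
  cases h with
  | fwd p q => simpa [List.append_assoc] using Step.fwd p (q ++ t)
  | bwd p q => simpa [List.append_assoc] using Step.bwd p (q ++ t)

theorem RTG.app_left {u v : List (Fin 2)} (t : List (Fin 2))
    (h : Relation.ReflTransGen Step u v) :
    Relation.ReflTransGen Step (t ++ u) (t ++ v) := by
  induction h with
  | refl => exact Relation.ReflTransGen.refl
  | tail _ hs ih => exact ih.tail (hs.app_left t)

theorem RTG.app_right {u v : List (Fin 2)} (t : List (Fin 2))
    (h : Relation.ReflTransGen Step u v) :
    Relation.ReflTransGen Step (u ++ t) (v ++ t) := by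
  induction h with
  | refl => exact Relation.ReflTransGen.refl
  | tail _ hs ih => exact ih.tail (hs.app_right t)

/-- The congruence given by the reflexive-transitive closure of `Step`. -/
def stepCon : Con W where
  r x y := Relation.ReflTransGen Step (FreeMonoid.toList x) (FreeMonoid.toList y)
  iseqv := ⟨fun _ => Relation.ReflTransGen.refl,
    fun h => (@Relation.ReflTransGen.stdSymm _ Step ⟨fun _ _ hs => hs.symm'⟩).symm _ _ h,
    fun h₁ h₂ => h₁.trans h₂⟩
  mul' {w x y z} h₁ h₂ :=
    (RTG.app_right (FreeMonoid.toList y) h₁).trans (RTG.app_left (FreeMonoid.toList x) h₂)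

theorem conGen_le_stepCon : conGen braidRel ≤ stepCon := by
  apply Con.conGen_le.2
  rintro x y ⟨rfl, rfl⟩
  exact Relation.ReflTransGen.single (by simpa using Step.fwd [] [])

theorem step_to_conGen {u v : List (Fin 2)} (h : Step u v) :
    conGen braidRel (FreeMonoid.ofList u) (FreeMonoid.ofList v) := by
  have base : conGen braidRel (FreeMonoid.ofList [0, 1, 0]) (FreeMonoid.ofList [1, 0, 1]) :=
    ConGen.Rel.of _ _ ⟨rfl, rfl⟩
  cases h with
  | fwd p q =>
    simpa [FreeMonoid.ofList_append, mul_assoc] using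
      (conGen braidRel).mul ((conGen braidRel).mul ((conGen braidRel).refl
        (FreeMonoid.ofList p)) base) ((conGen braidRel).refl (FreeMonoid.ofList q))
  | bwd p q =>
    simpa [FreeMonoid.ofList_append, mul_assoc] using
      (conGen braidRel).mul ((conGen braidRel).mul ((conGen braidRel).refl
        (FreeMonoid.ofList p)) ((conGen braidRel).symm base))
        ((conGen braidRel).refl (FreeMonoid.ofList q))

theorem rtg_to_conGen {u v : List (Fin 2)} (h : Relation.ReflTransGen Step u v) :
    conGen braidRel (FreeMonoid.ofList u) (FreeMonoid.ofList v) := by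
  induction h with
  | refl => exact (conGen braidRel).refl _
  | tail _ hs ih => exact (conGen braidRel).trans ih (step_to_conGen hs)

theorem step_head {x w : List (Fin 2)} (h : Step x w) (u : List (Fin 2))
    (hx : x = 0 :: u) :
    (∃ u', w = 0 :: u' ∧ Step u u') ∨ ∃ q, u = 1 :: 0 :: q := by
  cases h with
  | fwd p q =>
    cases p with
    | nil =>
      simp only [List.nil_append, List.cons_append, List.cons.injEq, true_and] at hx
      exact Or.inr ⟨q, hx.symm⟩
    | cons c p' =>
      simp only [List.cons_append, List.cons.injEq] at hx
      obtain ⟨rfl, rfl⟩ := hx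
      exact Or.inl ⟨p' ++ [1, 0, 1] ++ q, by simp, Step.fwd p' q⟩
  | bwd p q =>
    cases p with
    | nil => simp at hx
    | cons c p' =>
      simp only [List.cons_append, List.cons.injEq] at hx
      obtain ⟨rfl, rfl⟩ := hx
      exact Or.inl ⟨p' ++ [0, 1, 0] ++ q, by simp, Step.bwd p' q⟩

theorem extract {x w : List (Fin 2)} (h : Relation.ReflTransGen Step x w) :
    ∀ u v, x = 0 :: u → w = 1 :: v →
      ∃ s, Relation.ReflTransGen Step u (1 :: 0 :: s) := by
  induction h using Relation.ReflTransGen.head_induction_on with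
  | refl =>
    intro u v h1 h2
    rw [h1] at h2
    simp at h2
  | head hs _ ih =>
    intro u v h1 h2
    subst h1
    rcases step_head hs u rfl with ⟨u', rfl, hu⟩ | ⟨q, rfl⟩
    · obtain ⟨s, hrtg⟩ := ih u' v rfl h2
      exact ⟨s, Relation.ReflTransGen.head hu hrtg⟩
    · exact ⟨q, Relation.ReflTransGen.refl⟩

/-- The generators of `B3⁺`. -/
def A : BraidMonoid3 := (conGen braidRel).mk' (FreeMonoid.of 0)
def B : BraidMonoid3 := (conGen braidRel).mk' (FreeMonoid.of 1)

theorem braid_eq : A * B * A = B * A * B := by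
  simp only [A, B, ← map_mul]
  exact (conGen braidRel).eq.2 (ConGen.Rel.of _ _ ⟨rfl, rfl⟩)

/-- Key lemma: any common right multiple of `a` and `b` is a right multiple of `aba`. -/
theorem key (k : BraidMonoid3) (ha : ∃ z, A * z = k) (hb : ∃ z, B * z = k) :
    ∃ z, (A * B * A) * z = k := by
  obtain ⟨z1, rfl⟩ := ha
  obtain ⟨z2, h2⟩ := hb
  obtain ⟨u, rfl⟩ := Con.mk'_surjective z1
  obtain ⟨v, rfl⟩ := Con.mk'_surjective z2
  have h2' : (conGen braidRel).mk' (FreeMonoid.of 0 * u) =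
      (conGen braidRel).mk' (FreeMonoid.of 1 * v) := by
    rw [map_mul, map_mul]; exact h2.symm
  have hc : conGen braidRel (FreeMonoid.of 0 * u) (FreeMonoid.of 1 * v) := (conGen braidRel).eq.1 h2'
  have hr : Relation.ReflTransGen Step (0 :: FreeMonoid.toList u)
      (1 :: FreeMonoid.toList v) := conGen_le_stepCon hc
  obtain ⟨s, hs⟩ := extract hr (FreeMonoid.toList u) (FreeMonoid.toList v) rfl rfl
  have hcon : conGen braidRel u (FreeMonoid.ofList (1 :: 0 :: s)) := rtg_to_conGen hs
  refine ⟨(conGen braidRel).mk' (FreeMonoid.ofList s), ?_⟩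
  have hprod : conGen braidRel
      (FreeMonoid.of 0 * FreeMonoid.of 1 * FreeMonoid.of 0 * FreeMonoid.ofList s)
      (FreeMonoid.of 0 * u) := by
    have h' := (conGen braidRel).mul ((conGen braidRel).refl (FreeMonoid.of 0))
      ((conGen braidRel).symm hcon)
    simpa [FreeMonoid.ofList_cons, mul_assoc] using h'
  calc (A * B * A) * (conGen braidRel).mk' (FreeMonoid.ofList s)
      = (conGen braidRel).mk'
        (FreeMonoid.of 0 * FreeMonoid.of 1 * FreeMonoid.of 0 * FreeMonoid.ofList s) := by
        simp [A, B, ← map_mul]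
    _ = (conGen braidRel).mk' (FreeMonoid.of 0 * u) := (conGen braidRel).eq.2 hprod
    _ = A * (conGen braidRel).mk' u := by simp [A, ← map_mul]

/-- The explicit six-element set. -/
def SS : Set BraidMonoid3 := {1, A, B, A * B, B * A, A * B * A}

theorem mem1 : (1 : BraidMonoid3) ∈ SS := Or.inl rfl
theorem memA : A ∈ SS := Or.inr (Or.inl rfl)
theorem memB : B ∈ SS := Or.inr (Or.inr (Or.inl rfl))
theorem memAB : A * B ∈ SS := Or.inr (Or.inr (Or.inr (Or.inl rfl)))
theorem memBA : B * A ∈ SS := Or.inr (Or.inr (Or.inr (Or.inr (Or.inl rfl))))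
theorem memD : A * B * A ∈ SS := Or.inr (Or.inr (Or.inr (Or.inr (Or.inr rfl))))

theorem lcm_left_dvd {x y : BraidMonoid3} (d : BraidMonoid3) (h : x * d = y) :
    IsRightLcm x y y := ⟨⟨d, h⟩, ⟨1, mul_one y⟩, fun _ _ h2 => h2⟩

theorem lcm_right_dvd {x y : BraidMonoid3} (e : BraidMonoid3) (h : y * e = x) :
    IsRightLcm x y x := ⟨⟨1, mul_one x⟩, ⟨e, h⟩, fun _ h1 _ => h1⟩

theorem lcm_delta {x y : BraidMonoid3} (dx dy : BraidMonoid3)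
    (hdx : x * dx = A * B * A) (hdy : y * dy = A * B * A)
    (hmin : ∀ k, (∃ z, x * z = k) → (∃ z, y * z = k) →
      (∃ z, A * z = k) ∧ ∃ z, B * z = k) :
    IsRightLcm x y (A * B * A) :=
  ⟨⟨dx, hdx⟩, ⟨dy, hdy⟩, fun k h1 h2 => key k (hmin k h1 h2).1 (hmin k h1 h2).2⟩

theorem divA {k : BraidMonoid3} (h : ∃ z, A * B * z = k) : ∃ z, A * z = k := by
  obtain ⟨z, hz⟩ := h; exact ⟨B * z, by rw [← mul_assoc]; exact hz⟩

theorem divB {k : BraidMonoid3} (h : ∃ z, B * A * z = k) : ∃ z, B * z = k := by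
  obtain ⟨z, hz⟩ := h; exact ⟨A * z, by rw [← mul_assoc]; exact hz⟩

theorem divA' {k : BraidMonoid3} (h : ∃ z, A * B * A * z = k) : ∃ z, A * z = k := by
  obtain ⟨z, hz⟩ := h; exact ⟨B * A * z, by rw [← mul_assoc, ← mul_assoc]; exact hz⟩

-- products equal to Δ
theorem eA : A * (B * A) = A * B * A := (mul_assoc A B A).symm
theorem eB : B * (A * B) = A * B * A := by rw [← mul_assoc]; exact braid_eq.symm
theorem eAB : (A * B) * A = A * B * A := rfl
theorem eBA : (B * A) * B = A * B * A := braid_eq.symm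

end Braid3Aux

open Braid3Aux in
/-- In `B3⁺`, the set `S = {1, a, b, ab, ba, aba}` is closed under right-lcms
and right-complements: any two elements of `S` admitting a common
right-multiple have a right-lcm in `S`, and the corresponding complement also
lies in `S`. -/
theorem braid3_garside_family_closed :
    let a : BraidMonoid3 := (conGen braidRel).mk' (FreeMonoid.of 0)
    let b : BraidMonoid3 := (conGen braidRel).mk' (FreeMonoid.of 1)
    let S : Set BraidMonoid3 := {1, a, b, a * b, b * a, a * b * a}
    ∀ x ∈ S, ∀ y ∈ S,
      (∃ m, (∃ z, x * z = m) ∧ (∃ z, y * z = m)) →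
      ∃ l z : BraidMonoid3, IsRightLcm x y l ∧ l ∈ S ∧ x * z = l ∧ z ∈ S := by
  intro a b S x hx y hy _
  have hS : S = SS := rfl
  rw [hS] at hx hy ⊢
  have hx' : x = 1 ∨ x = A ∨ x = B ∨ x = A * B ∨ x = B * A ∨ x = A * B * A := hx
  have hy' : y = 1 ∨ y = A ∨ y = B ∨ y = A * B ∨ y = B * A ∨ y = A * B * A := hy
  clear hx
  rcases hx' with rfl | rfl | rfl | rfl | rfl | rfl
  · exact ⟨y, y, lcm_left_dvd y (one_mul y), hy, one_mul y, hy⟩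
  · rcases hy' with rfl | rfl | rfl | rfl | rfl | rfl
    · exact ⟨A, 1, lcm_right_dvd A (one_mul A), memA, mul_one A, mem1⟩
    · exact ⟨A, 1, lcm_left_dvd 1 (mul_one A), memA, mul_one A, mem1⟩
    · exact ⟨A * B * A, B * A, lcm_delta (B * A) (A * B) eA eB
        (fun k h1 h2 => ⟨h1, h2⟩), memD, eA, memBA⟩
    · exact ⟨A * B, B, lcm_left_dvd B rfl, memAB, rfl, memB⟩
    · exact ⟨A * B * A, B * A, lcm_delta (B * A) B eA eBA
        (fun k h1 h2 => ⟨h1, divB h2⟩), memD, eA, memBA⟩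
    · exact ⟨A * B * A, B * A, lcm_left_dvd (B * A) eA, memD, eA, memBA⟩
  · rcases hy' with rfl | rfl | rfl | rfl | rfl | rfl
    · exact ⟨B, 1, lcm_right_dvd B (one_mul B), memB, mul_one B, mem1⟩
    · exact ⟨A * B * A, A * B, lcm_delta (A * B) (B * A) eB eA
        (fun k h1 h2 => ⟨h2, h1⟩), memD, eB, memAB⟩
    · exact ⟨B, 1, lcm_left_dvd 1 (mul_one B), memB, mul_one B, mem1⟩
    · exact ⟨A * B * A, A * B, lcm_delta (A * B) A eB eAB
        (fun k h1 h2 => ⟨divA h2, h1⟩), memD, eB, memAB⟩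
    · exact ⟨B * A, A, lcm_left_dvd A rfl, memBA, rfl, memA⟩
    · exact ⟨A * B * A, A * B, lcm_left_dvd (A * B) eB, memD, eB, memAB⟩
  · rcases hy' with rfl | rfl | rfl | rfl | rfl | rfl
    · exact ⟨A * B, 1, lcm_right_dvd (A * B) (one_mul _), memAB, mul_one _, mem1⟩
    · exact ⟨A * B, 1, lcm_right_dvd B rfl, memAB, mul_one _, mem1⟩
    · exact ⟨A * B * A, A, lcm_delta A (A * B) eAB eB
        (fun k h1 h2 => ⟨divA h1, h2⟩), memD, eAB, memA⟩
    · exact ⟨A * B, 1, lcm_left_dvd 1 (mul_one _), memAB, mul_one _, mem1⟩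
    · exact ⟨A * B * A, A, lcm_delta A B eAB eBA
        (fun k h1 h2 => ⟨divA h1, divB h2⟩), memD, eAB, memA⟩
    · exact ⟨A * B * A, A, lcm_left_dvd A eAB, memD, eAB, memA⟩
  · rcases hy' with rfl | rfl | rfl | rfl | rfl | rfl
    · exact ⟨B * A, 1, lcm_right_dvd (B * A) (one_mul _), memBA, mul_one _, mem1⟩
    · exact ⟨A * B * A, B, lcm_delta B (B * A) eBA eA
        (fun k h1 h2 => ⟨h2, divB h1⟩), memD, eBA, memB⟩
    · exact ⟨B * A, 1, lcm_right_dvd A rfl, memBA, mul_one _, mem1⟩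
    · exact ⟨A * B * A, B, lcm_delta B A eBA eAB
        (fun k h1 h2 => ⟨divA h2, divB h1⟩), memD, eBA, memB⟩
    · exact ⟨B * A, 1, lcm_left_dvd 1 (mul_one _), memBA, mul_one _, mem1⟩
    · exact ⟨A * B * A, B, lcm_left_dvd B eBA, memD, eBA, memB⟩
  · rcases hy' with rfl | rfl | rfl | rfl | rfl | rfl
    · exact ⟨A * B * A, 1, lcm_right_dvd (A * B * A) (one_mul _), memD, mul_one _, mem1⟩
    · exact ⟨A * B * A, 1, lcm_right_dvd (B * A) eA, memD, mul_one _, mem1⟩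
    · exact ⟨A * B * A, 1, lcm_right_dvd (A * B) eB, memD, mul_one _, mem1⟩
    · exact ⟨A * B * A, 1, lcm_right_dvd A eAB, memD, mul_one _, mem1⟩
    · exact ⟨A * B * A, 1, lcm_right_dvd B eBA, memD, mul_one _, mem1⟩
    · exact ⟨A * B * A, 1, lcm_left_dvd 1 (mul_one _), memD, mul_one _, mem1⟩
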